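/- Let w be a C∞-word of height k > 0. If w is single-rooted, then w has exactly one factor that is a single-rooted minimal word of height k; if w is double-rooted, then w has exactly two distinct factors that are single-rooted minimal words of height k. -/

import Mathlib

namespace CInfWords

open scoped Classical

/-- Run-length encoding Δ of a word. -/
def rle : List ℕ → List ℕ
  | [] => []
  | [_] => [1]
  | a :: b :: l =>
    if a = b then
      match rle (b :: l) with
      | [] => [1]
      | c :: r => (c + 1) :: r
    else 1 :: rle (b :: l)

/-- Erase a leading `1`, if any. -/
def trim1 : List ℕ → List ℕ
  | 1 :: l => l
  | l => l

/-- The derivative `D`: the run-length encoding with the first and/or the last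
symbol erased when they are equal to `1`. -/
def D (w : List ℕ) : List ℕ := trim1 ((trim1 (rle w).reverse).reverse)

/-- Words over Σ = {1,2}. -/
def IsWord (w : List ℕ) : Prop := ∀ x ∈ w, x = 1 ∨ x = 2

/-- Words over Σ₀ = {0,1,2}. -/
def IsWord0 (w : List ℕ) : Prop := ∀ x ∈ w, x = 0 ∨ x = 1 ∨ x = 2

/-- Σ₀^{++}: words over Σ₀ that are empty or begin with a nonzero symbol. -/
def Spp (w : List ℕ) : Prop := IsWord0 w ∧ (w = [] ∨ w.headI ≠ 0)

/-- C^∞-words: every iterated derivative is a word over Σ = {1,2}. -/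
def Cinf (w : List ℕ) : Prop := ∀ k, IsWord (D^[k] w)

/-- The height of a C^∞-word: the least k with D^[k] w = ε. -/
noncomputable def height (w : List ℕ) : ℕ := sInf {k | D^[k] w = []}

/-- The root of a C^∞-word of height k > 0: its (k-1)-st derivative. -/
noncomputable def root (w : List ℕ) : List ℕ := D^[height w - 1] w

/-- `v` is a primitive of `w`. -/
def Primitive (v w : List ℕ) : Prop := IsWord v ∧ D v = w

/-- The complement: swap 1's and 2's. -/
def compl (w : List ℕ) : List ℕ := w.map (fun x => 3 - x)

/-- Minimal C^∞-words: every derivative is a shortest primitive of the next one. -/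
def Minimal (w : List ℕ) : Prop :=
  Cinf w ∧ 0 < height w ∧
    ∀ j, j + 2 ≤ height w → ∀ v, Primitive v (D^[j+1] w) → (D^[j] w).length ≤ v.length

/-- Maximal C^∞-words: every derivative is a longest primitive of the next one. -/
def Maximal (w : List ℕ) : Prop :=
  Cinf w ∧ 0 < height w ∧
    ∀ j, j + 2 ≤ height w → ∀ v, Primitive v (D^[j+1] w) → v.length ≤ (D^[j] w).length

def LeftMinimal (w : List ℕ) : Prop := ∃ v, Minimal v ∧ w <+: v
def RightMinimal (w : List ℕ) : Prop := ∃ v, Minimal v ∧ w <:+ v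
def LeftMaximal (w : List ℕ) : Prop := ∃ v, Maximal v ∧ w <+: v
def RightMaximal (w : List ℕ) : Prop := ∃ v, Maximal v ∧ w <:+ v

/-- Single-rooted minimal words. -/
def SRMin (w : List ℕ) : Prop := Minimal w ∧ (root w).length = 1

/-- Double-rooted minimal words. -/
def DRMin (w : List ℕ) : Prop := Minimal w ∧ (root w).length = 2

/-- The left frontier Ψ(w). -/
noncomputable def psi (w : List ℕ) : List ℕ :=
  (List.range (height w)).map fun i =>
    if i = 0 then w.getD 0 0
    else if (D^[i] w).getD 0 0 = 2 ∧ (D^[i-1] w).getD 0 0 ≠ (D^[i-1] w).getD 1 0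
      then 0
    else (D^[i] w).getD 0 0

/-- The single-rooted minimal word with left frontier U (if it exists). -/
noncomputable def srmOf (U : List ℕ) : List ℕ :=
  if h : ∃ w, SRMin w ∧ psi w = U then h.choose else []

/-- The double-rooted minimal word with left frontier U (if it exists). -/
noncomputable def drmOf (U : List ℕ) : List ℕ :=
  if h : ∃ w, DRMin w ∧ psi w = U then h.choose else []

/-- Γs: the right frontier of the single-rooted minimal word with left frontier U. -/
noncomputable def Gs (U : List ℕ) : List ℕ := psi (srmOf U).reverse

/-- Γd: the right frontier of the double-rooted minimal word with left frontier U. -/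
noncomputable def Gd (U : List ℕ) : List ℕ := psi (drmOf U).reverse

/-- Θ = Γs ∘ Γd. -/
noncomputable def Th (U : List ℕ) : List ℕ := Gs (Gd U)

/-- Π = Γd ∘ Γs. -/
noncomputable def Pp (U : List ℕ) : List ℕ := Gd (Gs U)

/-- One step in the graph G: from node U, the edge labeled 1 goes to U·1, the edge
labeled 2 goes to U·2, and the edge labeled 0 goes to Θ(U)·2. -/
noncomputable def step (U : List ℕ) (a : ℕ) : List ℕ :=
  if a = 1 then U ++ [1] else if a = 2 then U ++ [2] else Th U ++ [2]

/-- The endpoint of the path in G starting at the origin ε and labeled by W. -/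
noncomputable def pathEnd (W : List ℕ) : List ℕ := W.foldl step []

/-- W ∈ Σ₀^{++} labels a directed path in G from ε to U. -/
def LabelsPath (W U : List ℕ) : Prop := Spp W ∧ pathEnd W = U

/-- ‖U‖: the number of words in Σ₀^{++} labeling a path in G from ε to U. -/
noncomputable def normG (U : List ℕ) : ℕ := {W | LabelsPath W U}.ncard

/-- |U|: the length of the single-rooted minimal word with left frontier U. -/
noncomputable def len (U : List ℕ) : ℕ := (srmOf U).length

/-- u is the minimal part of w: the first (leftmost-occurring) factor of w that
is a single-rooted minimal word of the same height as w. -/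
def IsMinPart (u w : List ℕ) : Prop :=
  ∃ s t, w = s ++ u ++ t ∧ SRMin u ∧ height u = height w ∧
    ∀ u' s' t', w = s' ++ u' ++ t' → SRMin u' → height u' = height w →
      s.length ≤ s'.length

/-- decode: expand run lengths starting with symbol a. -/
def E (a : ℕ) : List ℕ → List ℕ
  | [] => []
  | c :: r => List.replicate c a ++ E (3 - a) r

lemma rle_ne_nil : ∀ (a : ℕ) (l : List ℕ), rle (a :: l) ≠ [] := by
  intro a l
  induction l generalizing a with
  | nil => simp [rle]
  | cons b l ih =>
    rw [rle]
    split
    · rcases h : rle (b :: l) with _ | ⟨c, r⟩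
      · exact absurd h (ih b)
      · simp
    · simp

lemma rle_sum : ∀ (w : List ℕ), (rle w).sum = w.length := by
  intro w
  induction w with
  | nil => simp [rle]
  | cons a l ih =>
    cases l with
    | nil => simp [rle]
    | cons b l =>
      rw [rle]
      split
      · rcases h : rle (b :: l) with _ | ⟨c, r⟩
        · exact absurd h (rle_ne_nil b l)
        · rw [h] at ih
          simp at ih ⊢
          omega
      · simp at ih ⊢; omega

lemma rle_pos : ∀ (w : List ℕ), ∀ x ∈ rle w, 0 < x := by
  intro w
  induction w with
  | nil => simp [rle]
  | cons a l ih =>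
    cases l with
    | nil => simp [rle]
    | cons b l =>
      rw [rle]
      split
      · rcases h : rle (b :: l) with _ | ⟨c, r⟩
        · exact absurd h (rle_ne_nil b l)
        · rw [h] at ih
          intro x hx
          simp at hx
          rcases hx with h1 | h2
          · omega
          · exact ih x (by simp [h2])
      · intro x hx
        simp at hx
        rcases hx with h1 | h2
        · omega
        · exact ih x h2

lemma E_length (a : ℕ) (r : List ℕ) : (E a r).length = r.sum := by
  induction r generalizing a with
  | nil => simp [E]
  | cons c r ih => simp [E, ih]

lemma rle_replicate_append (a : ℕ) (X : List ℕ)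
    (hX : ∀ h, X.head? = some h → h ≠ a) :
    ∀ c, 0 < c → rle (List.replicate c a ++ X) = c :: rle X := by
  intro c
  induction c with
  | zero => omega
  | succ c ih =>
    intro _
    rcases Nat.eq_zero_or_pos c with rfl | hc'
    · have e0 : List.replicate (0+1) a ++ X = a :: X := by simp
      rw [e0]
      cases X with
      | nil => simp [rle]
      | cons b X' =>
        have hb : b ≠ a := hX b rfl
        rw [rle, if_neg (fun h => hb h.symm)]
    · have ih' := ih hc'
      have e1 : List.replicate c a ++ X = a :: (List.replicate (c-1) a ++ X) := by
        obtain ⟨c', rfl⟩ : ∃ c', c = c' + 1 := ⟨c - 1, by omega⟩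
        simp [List.replicate_succ]
      have e2 : List.replicate (c+1) a ++ X = a :: a :: (List.replicate (c-1) a ++ X) := by
        rw [← e1]
        simp [List.replicate_succ]
      rw [e1] at ih'
      rw [e2, rle, if_pos rfl, ih']

lemma E_head (a c : ℕ) (r : List ℕ) (hc : 0 < c) :
    ∀ h, (E a (c :: r)).head? = some h → h = a := by
  intro h hh
  rcases c with _ | c
  · omega
  · simp [E, List.replicate_succ] at hh
    omega

lemma rle_E (a : ℕ) (ha : a = 1 ∨ a = 2) :
    ∀ r : List ℕ, (∀ c ∈ r, 0 < c) → rle (E a r) = r := by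
  intro r
  induction r generalizing a with
  | nil => simp [E, rle]
  | cons c r ih =>
    intro hr
    rw [E]
    have hX : ∀ h, (E (3-a) r).head? = some h → h ≠ a := by
      intro h hh
      cases r with
      | nil => simp [E] at hh
      | cons c' r' =>
        have := E_head (3-a) c' r' (hr c' (by simp)) h hh
        omega
    rw [rle_replicate_append a (E (3-a) r) hX c (hr c (by simp))]
    congr 1
    exact ih (3-a) (by omega) (fun x hx => hr x (by simp [hx]))

lemma E_recover : ∀ (w : List ℕ), IsWord w → ∀ a, w.head? = some a → E a (rle w) = w := by
  intro w
  induction w with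
  | nil => simp
  | cons x l ih =>
    intro hw a ha
    simp at ha
    subst ha
    cases l with
    | nil => simp [rle, E]
    | cons b l =>
      have hred : E b (rle (b :: l)) = b :: l :=
        ih (fun y hy => hw y (by simp [hy])) b rfl
      rw [rle]
      split
      · rename_i hab
        rcases h : rle (b :: l) with _ | ⟨c, r⟩
        · exact absurd h (rle_ne_nil b l)
        · rw [h] at hred
          subst hab
          rw [E, List.replicate_succ, List.cons_append]
          rw [E] at hred
          rw [hred]
      · rename_i hab
        have hx : x = 1 ∨ x = 2 := hw x (by simp)
        have hb : b = 1 ∨ b = 2 := hw b (by simp)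
        have h3 : 3 - x = b := by omega
        rw [E, List.replicate_one, List.singleton_append, h3, hred]

lemma E_isWord (a : ℕ) (ha : a = 1 ∨ a = 2) :
    ∀ r : List ℕ, IsWord (E a r) := by
  intro r
  induction r generalizing a with
  | nil => intro x hx; simp [E] at hx
  | cons c r ih =>
    intro x hx
    simp [E] at hx
    rcases hx with h1 | h2
    · omega
    · exact ih (3-a) (by omega) x h2

lemma E_append (a : ℕ) (ha : a = 1 ∨ a = 2) (r q : List ℕ) :
    E a (r ++ q) = E a r ++ E (if r.length % 2 = 0 then a else 3 - a) q := by
  induction r generalizing a with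
  | nil => simp [E]
  | cons c r ih =>
    have hif : E (if r.length % 2 = 0 then (3-a) else 3-(3-a)) q
        = E (if (c :: r).length % 2 = 0 then a else 3-a) q := by
      have h3 : (3:ℕ) - (3 - a) = a := by omega
      have hl : (c :: r).length = r.length + 1 := by simp
      rcases Nat.even_or_odd r.length with he | ho
      · have h1 : r.length % 2 = 0 := Nat.even_iff.mp he
        have h2 : (r.length + 1) % 2 = 1 := by omega
        simp [h1, hl, h2]
      · have h1 : r.length % 2 = 1 := Nat.odd_iff.mp ho
        have h2 : (r.length + 1) % 2 = 0 := by omega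
        simp [h1, hl, h2, h3]
    simp only [List.cons_append, E, List.append_assoc, List.append_eq]
    rw [ih (3-a) (by omega), hif]


def trimLast (l : List ℕ) : List ℕ := (trim1 l.reverse).reverse

lemma D_eq (w : List ℕ) : D w = trim1 (trimLast (rle w)) := rfl

lemma trim1_nil : trim1 [] = [] := rfl

lemma trim1_cons_one (l : List ℕ) : trim1 (1 :: l) = l := rfl

lemma trim1_cons_ne (x : ℕ) (l : List ℕ) (h : x ≠ 1) : trim1 (x :: l) = x :: l := by
  rw [trim1.eq_def]
  split
  · rename_i heq
    cases heq
    exact absurd rfl h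
  · rfl

lemma trim1_spec (l : List ℕ) :
    ∃ δ, l = δ ++ trim1 l ∧ ((δ = [] ∧ l.head? ≠ some 1) ∨ δ = [1]) := by
  cases l with
  | nil => exact ⟨[], by simp [trim1_nil]⟩
  | cons x l' =>
    by_cases hx : x = 1
    · subst hx
      exact ⟨[1], by simp [trim1_cons_one]⟩
    · exact ⟨[], by simp [trim1_cons_ne x l' hx, hx]⟩

lemma trimLast_spec (l : List ℕ) :
    ∃ δ, l = trimLast l ++ δ ∧ ((δ = [] ∧ l.getLast? ≠ some 1) ∨ δ = [1]) := by
  obtain ⟨δ, h1, h2⟩ := trim1_spec l.reverse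
  refine ⟨δ.reverse, ?_, ?_⟩
  · have := congrArg List.reverse h1
    simpa [trimLast] using this
  · rcases h2 with ⟨h3, h4⟩ | h3
    · left
      constructor
      · simp [h3]
      · rwa [List.head?_reverse] at h4
    · right
      simp [h3]

lemma getLast?_append_ne {α : Type*} (l₁ l₂ : List α) (h : l₂ ≠ []) :
    (l₁ ++ l₂).getLast? = l₂.getLast? := by
  rcases List.eq_nil_or_concat l₂ with rfl | ⟨L, b, rfl⟩
  · exact absurd rfl h
  · rw [List.concat_eq_append, ← List.append_assoc, List.getLast?_concat,
      List.getLast?_concat]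

lemma length_le_sum (l : List ℕ) (h : ∀ x ∈ l, 0 < x) : l.length ≤ l.sum := by
  induction l with
  | nil => simp
  | cons x m ih =>
    simp only [List.length_cons, List.sum_cons]
    have := h x (by simp)
    have := ih (fun y hy => h y (by simp [hy]))
    omega

lemma all_one_of_len_eq_sum (l : List ℕ) (h : ∀ x ∈ l, 0 < x)
    (he : l.length = l.sum) : ∀ x ∈ l, x = 1 := by
  induction l with
  | nil => simp
  | cons x m ih =>
    simp only [List.length_cons, List.sum_cons] at he
    have hx := h x (by simp)
    have hs := length_le_sum m (fun y hy => h y (by simp [hy]))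
    intro y hy
    rcases List.mem_cons.mp hy with rfl | hy'
    · omega
    · exact ih (fun z hz => h z (by simp [hz])) (by omega) y hy'

lemma D_decomp (w : List ℕ) :
    ∃ dL dR, rle w = dL ++ D w ++ dR ∧ (dL = [] ∨ dL = [1]) ∧ (dR = [] ∨ dR = [1]) ∧
      (dL = [] → (D w).head? ≠ some 1) ∧
      (dR = [] → D w ≠ [] → (D w).getLast? ≠ some 1) ∧
      (dL = [1] → (rle w).head? = some 1) ∧
      (dR = [1] → (rle w).getLast? = some 1) := by
  obtain ⟨dR, hR1, hR2⟩ := trimLast_spec (rle w)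
  obtain ⟨dL, hL1, hL2⟩ := trim1_spec (trimLast (rle w))
  rw [← D_eq] at hL1
  refine ⟨dL, dR, ?_, ?_, ?_, ?_, ?_, ?_, ?_⟩
  · rw [hR1, hL1, List.append_assoc]
  · rcases hL2 with ⟨h, _⟩ | h <;> [left; right] <;> exact h
  · rcases hR2 with ⟨h, _⟩ | h <;> [left; right] <;> exact h
  · intro h
    rcases hL2 with ⟨_, h4⟩ | h3
    · rw [h, List.nil_append] at hL1
      rw [← hL1]
      exact h4
    · simp [h] at h3
  · intro h hne
    rcases hR2 with ⟨_, h4⟩ | h3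
    · rw [h, List.append_nil] at hR1
      rw [hR1, hL1, getLast?_append_ne _ _ hne] at h4
      exact h4
    · simp [h] at h3
  · intro h
    subst h
    rw [hL1] at hR1
    rw [hR1]
    simp
  · intro h
    subst h
    rw [hR1]
    simp

lemma trim1_length (l : List ℕ) : (trim1 l).length ≤ l.length := by
  obtain ⟨δ, h1, _⟩ := trim1_spec l
  have := congrArg List.length h1
  simp at this
  omega

lemma D_nil : D [] = [] := rfl

lemma rle_len_le (w : List ℕ) : (rle w).length ≤ w.length :=
  le_trans (length_le_sum _ (rle_pos w)) (le_of_eq (rle_sum w))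

lemma D_length_lt (w : List ℕ) (h : w ≠ []) : (D w).length < w.length := by
  obtain ⟨dL, dR, hd, hL, hR, _, h5, _, _⟩ := D_decomp w
  have hsum := rle_sum w
  have hpos := rle_pos w
  have hwpos : 0 < w.length := List.length_pos_iff.mpr h
  have hrne : rle w ≠ [] := by
    cases w with
    | nil => exact absurd rfl h
    | cons a l => exact rle_ne_nil a l
  have hlen : (rle w).length = dL.length + (D w).length + dR.length := by
    rw [hd, List.length_append, List.length_append]
  have hle : (rle w).length ≤ w.length := rle_len_le w
  have hdl : dL.length ≤ 1 := by rcases hL with rfl | rfl <;> simp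
  have hdr : dR.length ≤ 1 := by rcases hR with rfl | rfl <;> simp
  rcases Nat.lt_or_ge (rle w).length w.length with hlt | hge
  · omega
  · have heq : (rle w).length = (rle w).sum := by omega
    have hall := all_one_of_len_eq_sum (rle w) hpos heq
    have hlast : (rle w).getLast? = some 1 := by
      rw [List.getLast?_eq_getLast hrne]
      exact congrArg some (hall _ (List.getLast_mem hrne))
    by_cases hDne : D w = []
    · simp [hDne]
      omega
    · have hdR : dR = [1] := by
        rcases hR with rfl | h'
        · exfalso
          apply h5 rfl hDne
          rw [hd, List.append_nil, getLast?_append_ne _ _ hDne] at hlast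
          exact hlast
        · exact h'
      subst hdR
      have h1len : ([1] : List ℕ).length = 1 := rfl
      omega

lemma iter_D_nil (n : ℕ) : D^[n] [] = [] := by
  induction n with
  | zero => rfl
  | succ n ih => rw [Function.iterate_succ_apply, D_nil, ih]

lemma iter_D_length (w : List ℕ) : D^[w.length] w = [] := by
  generalize hn : w.length = n
  induction n using Nat.strong_induction_on generalizing w with
  | _ n ih =>
    cases n with
    | zero =>
      rw [List.length_eq_zero_iff] at hn
      simp [hn]
    | succ n =>
      have hne : w ≠ [] := by
        intro h; rw [h] at hn; simp at hn
      have hlt := D_length_lt w hne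
      rw [Function.iterate_succ_apply]
      have h2 : D^[(D w).length] (D w) = [] := ih (D w).length (by omega) (D w) rfl
      have : D^[n] (D w) = D^[n - (D w).length] (D^[(D w).length] (D w)) := by
        rw [← Function.iterate_add_apply]
        congr 1
        omega
      rw [this, h2, iter_D_nil]

lemma height_le_iff {w : List ℕ} {n : ℕ} : height w ≤ n ↔ D^[n] w = [] := by
  constructor
  · intro hle
    have hmem : height w ∈ {k | D^[k] w = []} :=
      Nat.sInf_mem ⟨w.length, iter_D_length w⟩
    have : D^[n] w = D^[n - height w] (D^[height w] w) := by
      rw [← Function.iterate_add_apply]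
      congr 1
      omega
    rw [this, hmem, iter_D_nil]
  · intro hn
    exact Nat.sInf_le hn

lemma iter_height (w : List ℕ) : D^[height w] w = [] :=
  height_le_iff.mp le_rfl

lemma height_eq_zero_iff {w : List ℕ} : height w = 0 ↔ w = [] := by
  rw [← Nat.le_zero, height_le_iff]
  simp

lemma height_D (w : List ℕ) (h : w ≠ []) : height (D w) = height w - 1 := by
  have hpos : 0 < height w := by
    rcases Nat.eq_zero_or_pos (height w) with h0 | h0
    · exact absurd (height_eq_zero_iff.mp h0) h
    · exact h0
  have h1 : height (D w) ≤ height w - 1 := by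
    rw [height_le_iff]
    have h2 : D^[height w - 1] (D w) = D^[height w] w := by
      rw [← Function.iterate_succ_apply]
      congr 1
      omega
    rw [h2, iter_height]
  have h2 : height w ≤ height (D w) + 1 := by
    rw [height_le_iff, Function.iterate_succ_apply]
    exact iter_height (D w)
  omega

lemma root_ne_nil (w : List ℕ) (h : 0 < height w) : root w ≠ [] := by
  intro hcon
  have : height w ≤ height w - 1 := height_le_iff.mpr hcon
  omega

lemma root_D (w : List ℕ) (h : 2 ≤ height w) : root (D w) = root w := by
  have hne : w ≠ [] := by
    intro hcon
    rw [hcon] at h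
    rw [show height ([] : List ℕ) = 0 from height_eq_zero_iff.mpr rfl] at h
    omega
  unfold root
  rw [height_D w hne, ← Function.iterate_succ_apply]
  congr 1
  omega

lemma cinf_D {w : List ℕ} (h : Cinf w) : Cinf (D w) := by
  intro k
  rw [← Function.iterate_succ_apply]
  exact h (k + 1)

lemma rle_mem_cinf {w : List ℕ} (h : Cinf w) : ∀ x ∈ rle w, x = 1 ∨ x = 2 := by
  obtain ⟨dL, dR, hd, hL, hR, _, _, _, _⟩ := D_decomp w
  intro x hx
  rw [hd] at hx
  simp at hx
  rcases hx with h1 | h2 | h3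
  · rcases hL with rfl | rfl
    · simp at h1
    · simp at h1; omega
  · have := h 1
    rw [Function.iterate_one] at this
    exact this x h2
  · rcases hR with rfl | rfl
    · simp at h3
    · simp at h3; omega



def lam (u : List ℕ) : List ℕ := if u.head? = some 1 then [1] else []
def rho (u : List ℕ) : List ℕ := if u.getLast? = some 1 then [1] else []

lemma lam_cases (u : List ℕ) : lam u = [] ∨ lam u = [1] := by
  unfold lam; split <;> simp

lemma rho_cases (u : List ℕ) : rho u = [] ∨ rho u = [1] := by
  unfold rho; split <;> simp

lemma lam_eq_nil_iff (u : List ℕ) : lam u = [] ↔ u.head? ≠ some 1 := by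
  unfold lam; split <;> simp_all

lemma rho_eq_nil_iff (u : List ℕ) : rho u = [] ↔ u.getLast? ≠ some 1 := by
  unfold rho; split <;> simp_all

lemma lam_eq_one_iff (u : List ℕ) : lam u = [1] ↔ u.head? = some 1 := by
  unfold lam; split <;> simp_all

lemma rho_eq_one_iff (u : List ℕ) : rho u = [1] ↔ u.getLast? = some 1 := by
  unfold rho; split <;> simp_all

lemma lam_len_le (u : List ℕ) : (lam u).length ≤ 1 := by
  rcases lam_cases u with h | h <;> simp [h]

lemma rho_len_le (u : List ℕ) : (rho u).length ≤ 1 := by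
  rcases rho_cases u with h | h <;> simp [h]

lemma prim_rle {p u : List ℕ} (hu : u ≠ []) (hD : D p = u) :
    ∃ dL dR, rle p = dL ++ u ++ dR ∧ (dL = [] ∨ dL = [1]) ∧ (dR = [] ∨ dR = [1]) ∧
      (lam u).length ≤ dL.length ∧ (rho u).length ≤ dR.length := by
  obtain ⟨dL, dR, hd, hL, hR, h4, h5, _, _⟩ := D_decomp p
  rw [hD] at hd h4 h5
  refine ⟨dL, dR, hd, hL, hR, ?_, ?_⟩
  · rcases lam_cases u with hl | hl
    · simp [hl]
    · rcases hL with rfl | rfl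
      · exact absurd (lam_eq_one_iff u |>.mp hl) (h4 rfl)
      · simp [hl]
  · rcases rho_cases u with hr | hr
    · simp [hr]
    · rcases hR with rfl | rfl
      · exact absurd (rho_eq_one_iff u |>.mp hr) (h5 rfl hu)
      · simp [hr]

lemma sum_cases_len (d : List ℕ) (hd : d = [] ∨ d = [1]) : d.sum = d.length := by
  rcases hd with rfl | rfl <;> simp

lemma prim_len_lb {p u : List ℕ} (hu : u ≠ []) (hD : D p = u) :
    u.sum + (lam u).length + (rho u).length ≤ p.length := by
  obtain ⟨dL, dR, hd, hL, hR, h1, h2⟩ := prim_rle hu hD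
  have hsum := rle_sum p
  have : (rle p).sum = dL.sum + u.sum + dR.sum := by
    rw [hd, List.sum_append, List.sum_append]
  have e1 := sum_cases_len dL hL
  have e2 := sum_cases_len dR hR
  omega

lemma prim_len_eq_rle {p u : List ℕ} (hu : u ≠ []) (hD : D p = u)
    (hl : p.length = u.sum + (lam u).length + (rho u).length) :
    rle p = lam u ++ u ++ rho u := by
  obtain ⟨dL, dR, hd, hL, hR, h1, h2⟩ := prim_rle hu hD
  have hsum := rle_sum p
  have hs2 : (rle p).sum = dL.sum + u.sum + dR.sum := by
    rw [hd, List.sum_append, List.sum_append]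
  have e1 := sum_cases_len dL hL
  have e2 := sum_cases_len dR hR
  have hL' : dL = lam u := by
    have : dL.length = (lam u).length := by omega
    rcases hL with rfl | rfl <;> rcases lam_cases u with hl2 | hl2 <;>
      simp [hl2] at this ⊢
  have hR' : dR = rho u := by
    have : dR.length = (rho u).length := by omega
    rcases hR with rfl | rfl <;> rcases rho_cases u with hl2 | hl2 <;>
      simp [hl2] at this ⊢
  rw [hd, hL', hR']

lemma trim1_of_head_ne (l : List ℕ) (h : l.head? ≠ some 1) : trim1 l = l := by
  cases l with
  | nil => rfl
  | cons x l' =>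
    apply trim1_cons_ne
    simp at h
    exact h

lemma trimLast_concat_one (l : List ℕ) : trimLast (l ++ [1]) = l := by
  unfold trimLast
  rw [List.reverse_append]
  simp [trim1_cons_one]

lemma trimLast_of_last_ne (l : List ℕ) (h : l.getLast? ≠ some 1) : trimLast l = l := by
  unfold trimLast
  rw [trim1_of_head_ne]
  · simp
  · rwa [List.head?_reverse]

lemma D_of_rle_lam_rho {p u : List ℕ} (hu : u ≠ [])
    (hrle : rle p = lam u ++ u ++ rho u) : D p = u := by
  rw [D_eq, hrle]
  have h1 : trimLast (lam u ++ u ++ rho u) = lam u ++ u := by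
    rcases rho_cases u with hr | hr
    · rw [hr, List.append_nil]
      apply trimLast_of_last_ne
      rw [getLast?_append_ne _ _ hu]
      rw [rho_eq_nil_iff] at hr
      exact hr
    · rw [hr, trimLast_concat_one]
  rw [h1]
  rcases lam_cases u with hl | hl
  · rw [hl, List.nil_append]
    apply trim1_of_head_ne
    rw [lam_eq_nil_iff] at hl
    exact hl
  · rw [hl, List.singleton_append, trim1_cons_one]

lemma lam_rho_pos {u : List ℕ} (hu : IsWord u) :
    ∀ c ∈ lam u ++ u ++ rho u, 0 < c := by
  intro c hc
  rcases List.mem_append.mp hc with h1 | h2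
  · rcases List.mem_append.mp h1 with h3 | h4
    · rcases lam_cases u with hl | hl <;> rw [hl] at h3
      · simp at h3
      · simp at h3; omega
    · have := hu c h4; omega
  · rcases rho_cases u with hl | hl <;> rw [hl] at h2
    · simp at h2
    · simp at h2; omega

lemma D_E_lam_rho {u : List ℕ} (hu : u ≠ []) (hword : IsWord u)
    (b : ℕ) (hb : b = 1 ∨ b = 2) :
    D (E b (lam u ++ u ++ rho u)) = u := by
  apply D_of_rle_lam_rho hu
  exact rle_E b hb _ (lam_rho_pos hword)

lemma iter_D_shift {v u : List ℕ} (hD : D v = u) (j : ℕ) : D^[j+1] v = D^[j] u := by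
  rw [Function.iterate_succ_apply, hD]

lemma minimal_shortest {v : List ℕ} (hv : Minimal v) (h2 : 2 ≤ height v) :
    rle v = lam (D v) ++ D v ++ rho (D v) := by
  obtain ⟨hcinf, hpos, hmin⟩ := hv
  set u := D v with hu
  have hvne : v ≠ [] := by
    intro hcon
    rw [hcon] at h2
    rw [show height ([] : List ℕ) = 0 from height_eq_zero_iff.mpr rfl] at h2
    omega
  have hune : u ≠ [] := by
    intro hcon
    have : height u = 0 := height_eq_zero_iff.mpr hcon
    rw [hu, height_D v hvne] at this
    omega
  have huword : IsWord u := by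
    have := hcinf 1
    rwa [Function.iterate_one] at this
  -- the witness primitive
  set p₀ := E 1 (lam u ++ u ++ rho u) with hp₀
  have hDp₀ : D p₀ = u := D_E_lam_rho hune huword 1 (Or.inl rfl)
  have hprim : Primitive p₀ (D^[0+1] v) := by
    constructor
    · exact E_isWord 1 (Or.inl rfl) _
    · rw [Function.iterate_one]
      exact hDp₀
  have hle := hmin 0 (by omega) p₀ hprim
  rw [Function.iterate_zero_apply] at hle
  have hp₀len : p₀.length = u.sum + (lam u).length + (rho u).length := by
    rw [hp₀, E_length]
    simp
    have e1 := sum_cases_len _ (lam_cases u)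
    have e2 := sum_cases_len _ (rho_cases u)
    omega
  have hlb := prim_len_lb hune hu.symm
  exact prim_len_eq_rle hune hu.symm (by omega)

lemma SRMin_D {v : List ℕ} (h : SRMin v) (h2 : 2 ≤ height v) :
    SRMin (D v) ∧ height (D v) = height v - 1 := by
  obtain ⟨⟨hcinf, hpos, hmin⟩, hroot⟩ := h
  have hvne : v ≠ [] := by
    intro hcon
    rw [hcon, show height ([] : List ℕ) = 0 from height_eq_zero_iff.mpr rfl] at h2
    omega
  have hh := height_D v hvne
  refine ⟨⟨⟨cinf_D hcinf, by omega, ?_⟩, ?_⟩, hh⟩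
  · intro j hj p hp
    rw [hh] at hj
    have e1 : D^[j+1] (D v) = D^[j+1+1] v := (iter_D_shift rfl (j+1)).symm
    have e2 : D^[j] (D v) = D^[j+1] v := (iter_D_shift rfl j).symm
    rw [e1] at hp
    rw [e2]
    exact hmin (j+1) (by omega) p hp
  · rw [root_D v h2, hroot]



lemma E_cons (a c : ℕ) (r : List ℕ) : E a (c :: r) = List.replicate c a ++ E (3-a) r := rfl

lemma head?_append_some {α : Type*} {l₁ l₂ : List α} {x : α} (h : l₁.head? = some x) :
    (l₁ ++ l₂).head? = some x := by
  cases l₁ with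
  | nil => simp at h
  | cons y l => simp at h ⊢; exact h

lemma replicate_append_head? (a k : ℕ) (t : List ℕ) (hk : 0 < k) :
    (List.replicate k a ++ t).head? = some a := by
  obtain ⟨k', rfl⟩ : ∃ k', k = k' + 1 := ⟨k - 1, by omega⟩
  simp [List.replicate_succ]

lemma E_head?' (a : ℕ) (r : List ℕ) (hr : r ≠ []) (hpos : ∀ c ∈ r, 0 < c) :
    (E a r).head? = some a := by
  cases r with
  | nil => exact absurd rfl hr
  | cons c r' =>
    rw [E_cons]
    exact replicate_append_head? a c _ (hpos c (by simp))

lemma repl_eq_aux {a k₁ k₂ : ℕ} {A B : List ℕ}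
    (h : List.replicate k₁ a ++ A = List.replicate k₂ a ++ B) (hlt : k₁ < k₂) :
    A = List.replicate (k₂ - k₁) a ++ B := by
  have e : List.replicate k₂ a = List.replicate k₁ a ++ List.replicate (k₂-k₁) a := by
    rw [← List.replicate_add]
    congr 1
    omega
  rw [e, List.append_assoc] at h
  exact List.append_cancel_left h

lemma PRE (qn : ℕ) (hqn : 0 < qn) : ∀ (q₀ : List ℕ),
    (∀ c ∈ q₀, 0 < c) → ∀ (b : ℕ), (b = 1 ∨ b = 2) → ∀ (e t : List ℕ),
    (∀ c ∈ e, 0 < c) → E b (q₀ ++ [qn]) ++ t = E b e →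
    ∃ d z, e = q₀ ++ [qn + d] ++ z := by
  intro q₀
  induction q₀ with
  | nil =>
    intro _ b hb e t he heq
    simp only [List.nil_append] at heq ⊢
    have hE : E b [qn] = List.replicate qn b := by simp [E]
    rw [hE] at heq
    cases e with
    | nil =>
      exfalso
      simp [E] at heq
      omega
    | cons e₁ e₀ =>
      rw [E_cons] at heq
      have he₁ : 0 < e₁ := he e₁ (by simp)
      have hle : qn ≤ e₁ := by
        by_contra hcon
        push_neg at hcon
        have h2 := repl_eq_aux heq.symm hcon
        cases e₀ with
        | nil =>
          simp [E] at h2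
          rcases h2 with ⟨h3, _⟩
          have : qn - e₁ = 0 := by simpa using h3.symm ▸ rfl
          omega
        | cons c₂ r₂ =>
          have hl : (E (3-b) (c₂::r₂)).head? = some (3-b) :=
            E_head?' _ _ (by simp) (fun c hc => he c (by simp [hc]))
          have hr : (List.replicate (qn - e₁) b ++ t).head? = some b :=
            replicate_append_head? b _ t (by omega)
          rw [h2] at hl
          rw [hl] at hr
          have : (3 : ℕ) - b = b := by injection hr
          omega
      exact ⟨e₁ - qn, e₀, by
        have : qn + (e₁ - qn) = e₁ := by omega
        rw [this]
        simp⟩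
  | cons c₁ q₀' ih =>
    intro hq₀ b hb e t he heq
    have hc₁ : 0 < c₁ := hq₀ c₁ (by simp)
    rw [List.cons_append, E_cons, List.append_assoc] at heq
    cases e with
    | nil =>
      exfalso
      simp [E] at heq
      omega
    | cons e₁ e₀ =>
      rw [E_cons] at heq
      have he₁ : 0 < e₁ := he e₁ (by simp)
      have hfrne : q₀' ++ [qn] ≠ [] := by simp
      have hfrpos : ∀ c ∈ q₀' ++ [qn], 0 < c := by
        intro c hc
        rcases List.mem_append.mp hc with h | h
        · exact hq₀ c (by simp [h])
        · simp at h; omega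
      have hceq : c₁ = e₁ := by
        rcases Nat.lt_trichotomy c₁ e₁ with hlt | heq' | hgt
        · exfalso
          have h2 := repl_eq_aux heq hlt
          have hl : (E (3-b) (q₀' ++ [qn]) ++ t).head? = some (3-b) :=
            head?_append_some (E_head?' _ _ hfrne hfrpos)
          have hr : (List.replicate (e₁ - c₁) b ++ E (3-b) e₀).head? = some b :=
            replicate_append_head? b _ _ (by omega)
          rw [h2] at hl
          rw [hl] at hr
          have : (3 : ℕ) - b = b := by injection hr
          omega
        · exact heq'
        · exfalso
          have h2 := repl_eq_aux heq.symm hgt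
          cases e₀ with
          | nil =>
            simp [E] at h2
            rcases h2 with ⟨h3, -⟩
            have : c₁ - e₁ = 0 := by simpa using h3.symm ▸ rfl
            omega
          | cons c₂ r₂ =>
            have hl : (E (3-b) (c₂::r₂)).head? = some (3-b) :=
              E_head?' _ _ (by simp) (fun c hc => he c (by simp [hc]))
            have hr : (List.replicate (c₁ - e₁) b ++ (E (3-b) (q₀' ++ [qn]) ++ t)).head? = some b :=
              replicate_append_head? b _ _ (by omega)
            rw [h2] at hl
            rw [hl] at hr
            have : (3 : ℕ) - b = b := by injection hr
            omega
      subst hceq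
      have heq2 : E (3-b) (q₀' ++ [qn]) ++ t = E (3-b) e₀ :=
        List.append_cancel_left heq
      obtain ⟨d, z, hz⟩ := ih (fun c hc => hq₀ c (by simp [hc])) (3-b) (by omega) e₀ t
        (fun c hc => he c (by simp [hc])) heq2
      exact ⟨d, z, by rw [hz]; simp⟩



lemma f_sum_pos {u : List ℕ} (hu : u ≠ []) (huw : IsWord u) :
    0 < (lam u ++ u ++ rho u).sum := by
  cases u with
  | nil => exact absurd rfl hu
  | cons u₁ u' =>
    have h1 : u₁ = 1 ∨ u₁ = 2 := huw u₁ (by simp)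
    have e1 := sum_cases_len _ (lam_cases (u₁::u'))
    have e2 := sum_cases_len _ (rho_cases (u₁::u'))
    rw [List.sum_append, List.sum_append, List.sum_cons]
    omega

lemma repl_head_eq {x y k₁ k₂ : ℕ} {A B : List ℕ}
    (h : List.replicate k₁ x ++ A = List.replicate k₂ y ++ B)
    (h1 : 0 < k₁) (h2 : 0 < k₂) : x = y := by
  have e1 := replicate_append_head? x k₁ A h1
  have e2 := replicate_append_head? y k₂ B h2
  rw [h, e2] at e1
  injection e1 with e1
  exact e1.symm

lemma contra1 {a : ℕ} (ha : a = 1 ∨ a = 2) {r : List ℕ} (hr : r ≠ [])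
    (hpos : ∀ c ∈ r, 0 < c) {k : ℕ} (hk : 0 < k) {t B : List ℕ}
    (h : E (3-a) r ++ t = List.replicate k a ++ B) : False := by
  have hl : (E (3-a) r ++ t).head? = some (3-a) :=
    head?_append_some (E_head?' (3-a) r hr hpos)
  rw [h, replicate_append_head? a k B hk] at hl
  injection hl with hl
  omega

lemma contra2 {a : ℕ} (ha : a = 1 ∨ a = 2) {e₀ : List ℕ}
    (hpos : ∀ c ∈ e₀, 0 < c) {k : ℕ} (hk : 0 < k) {B : List ℕ}
    (h : E (3-a) e₀ = List.replicate k a ++ B) : False := by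
  cases e₀ with
  | nil =>
    simp [E] at h
    rcases h with ⟨h1, -⟩
    omega
  | cons c₂ r₂ =>
    have hl := E_head?' (3-a) (c₂::r₂) (by simp) hpos
    rw [h, replicate_append_head? a k B hk] at hl
    injection hl with hl
    omega

lemma CORE (u : List ℕ) (hu : u ≠ []) (huw : IsWord u) :
    ∀ (e : List ℕ), (∀ c ∈ e, c = 1 ∨ c = 2) →
    ∀ (a : ℕ), (a = 1 ∨ a = 2) → ∀ (b : ℕ), (b = 1 ∨ b = 2) →
    ∀ (s t : List ℕ), E a e = s ++ E b (lam u ++ u ++ rho u) ++ t →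
    ∃ x z, e = x ++ u ++ z ∧ s.length + (lam u).length = x.sum ∧
      (lam u = [1] → x ≠ []) ∧ (rho u = [1] → z ≠ []) := by
  intro e
  induction e with
  | nil =>
    intro he a ha b hb s t heq
    exfalso
    simp [E] at heq
    rcases heq with ⟨-, h2, -⟩
    have h3 := congrArg List.length h2
    rw [E_length] at h3
    simp only [List.length_nil] at h3
    have h4 := f_sum_pos hu huw
    simp only [List.sum_append, List.append_assoc] at h3 h4
    omega
  | cons c e₀ ih =>
    intro he a ha b hb s t heq
    have hc2 : c = 1 ∨ c = 2 := he c (by simp)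
    have hc : 0 < c := by omega
    have he₀ : ∀ x ∈ e₀, x = 1 ∨ x = 2 := fun x hx => he x (by simp [hx])
    have he₀p : ∀ x ∈ e₀, 0 < x := fun x hx => by have := he₀ x hx; omega
    have hupos : ∀ x ∈ u, 0 < x := fun x hx => by have := huw x hx; omega
    rw [List.append_assoc] at heq
    by_cases hcs : c ≤ s.length
    · -- v starts after the first run
      have htake : List.take c s = List.replicate c a := by
        have t1 := congrArg (List.take c) heq
        rw [E_cons, List.take_left' (by simp), List.take_append_of_le_length hcs] at t1
        exact t1.symm
      have hdrop : E (3-a) e₀ = s.drop c ++ (E b (lam u ++ u ++ rho u) ++ t) := by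
        have t1 := congrArg (List.drop c) heq
        rw [E_cons, List.drop_left' (by simp), List.drop_append_of_le_length hcs] at t1
        exact t1
      rw [← List.append_assoc] at hdrop
      obtain ⟨x₀, z, hx, hlen, hxne, hzne⟩ :=
        ih he₀ (3-a) (by omega) b hb (s.drop c) t hdrop
      refine ⟨c :: x₀, z, ?_, ?_, by simp, hzne⟩
      · rw [hx]
        simp
      · have : (s.drop c).length = s.length - c := by simp
        rw [List.sum_cons, ← hlen, this]
        omega
    · push_neg at hcs
      set g := c - s.length with hg
      have hgpos : 0 < g := by omega
      have hdropped : E b (lam u ++ u ++ rho u) ++ t = List.replicate g a ++ E (3-a) e₀ := by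
        have t1 := congrArg (List.drop s.length) heq
        rw [List.drop_left] at t1
        rw [E_cons, List.drop_append_of_le_length (by simp; omega)] at t1
        have t2 : List.drop s.length (List.replicate c a) = List.replicate g a := by
          rw [show c = s.length + g from (by omega), List.replicate_add,
            List.drop_left' (by simp)]
        rw [t2] at t1
        exact t1.symm
      rcases lam_cases u with hl | hl
      · -- lam u = [], u starts with 2
        cases u with
        | nil => exact absurd rfl hu
        | cons u₁ u' =>
        have hu₁ : u₁ = 2 := by
          have h1 := (lam_eq_nil_iff _).mp hl
          have h2 : u₁ = 1 ∨ u₁ = 2 := huw u₁ (by simp)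
          simp at h1
          omega
        have hf : lam (u₁::u') ++ (u₁::u') ++ rho (u₁::u') = 2 :: (u' ++ rho (u₁::u')) := by
          rw [hl, hu₁]
          simp
        rw [hf, E_cons, List.append_assoc] at hdropped
        have hba : b = a := repl_head_eq hdropped (by omega) hgpos
        subst hba
        have hgle : g ≤ 2 := by omega
        have hge : g = 2 := by
          rcases Nat.lt_trichotomy 2 g with h1 | h1 | h1
          · omega
          · omega
          · -- g = 1
            exfalso
            have hg1 : g = 1 := by omega
            rw [hg1] at hdropped
            have h2 := repl_eq_aux hdropped.symm (by omega)
            exact contra2 hb he₀p (k := 2 - 1) (by omega) h2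
        have hs0 : s.length = 0 := by omega
        have hc2' : c = 2 := by omega
        have hsnil : s = [] := List.length_eq_zero_iff.mp hs0
        rw [hge] at hdropped
        have heq2 : E (3-b) (u' ++ rho (u₁::u')) ++ t = E (3-b) e₀ :=
          List.append_cancel_left hdropped
        have hfrpos : ∀ x ∈ u' ++ rho (u₁::u'), 0 < x := by
          intro x hx
          rcases List.mem_append.mp hx with h | h
          · exact hupos x (by simp [h])
          · rcases rho_cases (u₁::u') with h2 | h2 <;> rw [h2] at h <;> simp at h
            omega
        rcases rho_cases (u₁::u') with hr | hr
        · -- rho = []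
          by_cases hu' : u' = []
          · -- u = [2]
            refine ⟨[], e₀, ?_, by simp [hsnil, hl], by simp [hl], by simp [hr]⟩
            simp [hu', hu₁, hc2']
          · obtain ⟨u₀', un, hu'eq⟩ := (List.eq_nil_or_concat u').resolve_left hu'
            have hun2 : un = 2 := by
              have h1 := (rho_eq_nil_iff _).mp hr
              have h2 : (u₁::u').getLast? = some un := by
                rw [hu'eq, List.concat_eq_append, ← List.cons_append, List.getLast?_concat]
              have h3 : un = 1 ∨ un = 2 := huw un (by rw [hu'eq]; simp)
              rw [h2] at h1
              simp at h1
              omega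
            rw [hr, List.append_nil, hu'eq, List.concat_eq_append] at heq2
            obtain ⟨d, z₀, hz⟩ := PRE un (by omega) u₀'
              (fun x hx => hupos x (by rw [hu'eq]; simp [hx])) (3-b) (by omega) e₀ t he₀p heq2
            have hd0 : d = 0 := by
              have hmem : un + d ∈ e₀ := by rw [hz]; simp
              have := he₀ _ hmem
              omega
            refine ⟨[], z₀, ?_, by simp [hsnil, hl], by simp [hl], by simp [hr]⟩
            simp [hz, hd0, hun2, hu₁, hc2', hu'eq, List.concat_eq_append]
        · -- rho = [1]
          rw [hr] at heq2
          obtain ⟨d, z₀, hz⟩ := PRE 1 (by omega) u'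
            (fun x hx => hupos x (by simp [hx])) (3-b) (by omega) e₀ t he₀p heq2
          refine ⟨[], (1+d) :: z₀, ?_, by simp [hsnil, hl], by simp [hl], by simp⟩
          simp [hz, hu₁, hc2']
      · -- lam u = [1]
        have hf : lam u ++ u ++ rho u = 1 :: (u ++ rho u) := by
          rw [hl]
          simp
        rw [hf, E_cons, List.append_assoc] at hdropped
        have hba : b = a := repl_head_eq hdropped (by omega) hgpos
        subst hba
        have hfrpos : ∀ x ∈ u ++ rho u, 0 < x := by
          intro x hx
          rcases List.mem_append.mp hx with h | h
          · exact hupos x h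
          · rcases rho_cases u with h2 | h2 <;> rw [h2] at h <;> simp at h
            omega
        have hge : g = 1 := by
          rcases Nat.lt_trichotomy 1 g with h1 | h1 | h1
          · exfalso
            have h2 := repl_eq_aux hdropped (by omega)
            exact contra1 hb (by simp [hu]) hfrpos (k := g - 1) (by omega) h2
          · omega
          · omega
        rw [hge] at hdropped
        have heq2 : E (3-b) (u ++ rho u) ++ t = E (3-b) e₀ :=
          List.append_cancel_left hdropped
        have hclen : s.length + 1 = c := by omega
        rcases rho_cases u with hr | hr
        · -- rho = []
          obtain ⟨u₀, un, hueq⟩ := (List.eq_nil_or_concat u).resolve_left hu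
          have hun2 : un = 2 := by
            have h1 := (rho_eq_nil_iff _).mp hr
            have h2 : u.getLast? = some un := by
              rw [hueq, List.concat_eq_append, List.getLast?_concat]
            have h3 : un = 1 ∨ un = 2 := huw un (by rw [hueq]; simp)
            rw [h2] at h1
            simp at h1
            omega
          rw [hr, List.append_nil, hueq, List.concat_eq_append] at heq2
          obtain ⟨d, z₀, hz⟩ := PRE un (by omega) u₀
            (fun x hx => hupos x (by rw [hueq]; simp [hx])) (3-b) (by omega) e₀ t he₀p heq2
          have hd0 : d = 0 := by
            have hmem : un + d ∈ e₀ := by rw [hz]; simp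
            have := he₀ _ hmem
            omega
          refine ⟨[c], z₀, ?_, by simp [hl]; omega, by simp, by simp [hr]⟩
          simp [hz, hd0, hun2, hueq, List.concat_eq_append]
        · -- rho = [1]
          rw [hr] at heq2
          obtain ⟨d, z₀, hz⟩ := PRE 1 (by omega) u hupos (3-b) (by omega) e₀ t he₀p heq2
          refine ⟨[c], (1+d) :: z₀, ?_, by simp [hl]; omega, by simp, by simp⟩
          simp [hz]



lemma SRMin_lift {u : List ℕ} (hu : SRMin u) (b : ℕ) (hb : b = 1 ∨ b = 2) :
    SRMin (E b (lam u ++ u ++ rho u)) ∧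
    height (E b (lam u ++ u ++ rho u)) = height u + 1 ∧
    D (E b (lam u ++ u ++ rho u)) = u := by
  obtain ⟨⟨hcinf, hpos, hmin⟩, hroot⟩ := hu
  have hune : u ≠ [] := fun h => by rw [h, height_eq_zero_iff.mpr rfl] at hpos; omega
  have huw : IsWord u := hcinf 0
  set v := E b (lam u ++ u ++ rho u) with hv
  have hDv : D v = u := D_E_lam_rho hune huw b hb
  have hiter : ∀ j, D^[j+1] v = D^[j] u := iter_D_shift hDv
  have hhv : height v = height u + 1 := by
    have h1 : height v ≤ height u + 1 := by
      rw [height_le_iff, hiter, iter_height]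
    have h2 : ¬ height v ≤ height u := by
      intro hcon
      have h3 : D^[height u] v = [] := height_le_iff.mp hcon
      have h4 : D^[height u] v = D^[height u - 1] u := by
        conv_lhs => rw [show height u = (height u - 1) + 1 from (by omega)]
        rw [hiter]
      rw [h4] at h3
      exact root_ne_nil u hpos h3
    omega
  have hcinfv : Cinf v := by
    intro k
    cases k with
    | zero => exact E_isWord b hb _
    | succ k =>
      rw [hiter]
      exact hcinf k
  have hvlen : v.length = u.sum + (lam u).length + (rho u).length := by
    rw [hv, E_length, List.sum_append, List.sum_append]
    have e1 := sum_cases_len _ (lam_cases u)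
    have e2 := sum_cases_len _ (rho_cases u)
    omega
  refine ⟨⟨⟨hcinfv, by omega, ?_⟩, ?_⟩, hhv, hDv⟩
  · intro j hj p hp
    cases j with
    | zero =>
      rw [show (0:ℕ)+1 = 0+1 from rfl, hiter, Function.iterate_zero_apply] at hp
      rw [Function.iterate_zero_apply]
      have := prim_len_lb hune hp.2
      omega
    | succ j =>
      rw [hiter] at hp ⊢
      rw [hhv] at hj
      exact hmin j (by omega) p hp
  · show (D^[height v - 1] v).length = 1
    rw [hhv, show height u + 1 - 1 = (height u - 1) + 1 from (by omega), hiter]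
    exact hroot

def par (a n : ℕ) : ℕ := if n % 2 = 0 then a else 3 - a

lemma par_mem {a : ℕ} (ha : a = 1 ∨ a = 2) (n : ℕ) : par a n = 1 ∨ par a n = 2 := by
  unfold par; split <;> omega

lemma E_append' {a : ℕ} (ha : a = 1 ∨ a = 2) (r q : List ℕ) :
    E a (r ++ q) = E a r ++ E (par a r.length) q :=
  E_append a ha r q

lemma par_add {a : ℕ} (ha : a = 1 ∨ a = 2) (m n : ℕ) :
    par a (m + n) = par (par a m) n := by
  unfold par
  rcases Nat.even_or_odd m with hm | hm <;> rcases Nat.even_or_odd n with hn | hn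
  · have h1 : m % 2 = 0 := Nat.even_iff.mp hm
    have h2 : n % 2 = 0 := Nat.even_iff.mp hn
    have h3 : (m + n) % 2 = 0 := by omega
    simp [h1, h2, h3]
  · have h1 : m % 2 = 0 := Nat.even_iff.mp hm
    have h2 : n % 2 = 1 := Nat.odd_iff.mp hn
    have h3 : (m + n) % 2 = 1 := by omega
    simp [h1, h2, h3]
  · have h1 : m % 2 = 1 := Nat.odd_iff.mp hm
    have h2 : n % 2 = 0 := Nat.even_iff.mp hn
    have h3 : (m + n) % 2 = 1 := by omega
    simp [h1, h2, h3]
  · have h1 : m % 2 = 1 := Nat.odd_iff.mp hm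
    have h2 : n % 2 = 1 := Nat.odd_iff.mp hn
    have h3 : (m + n) % 2 = 0 := by omega
    simp [h1, h2, h3]
    omega

lemma getLast?_replicate_pos (a k : ℕ) (hk : 0 < k) :
    (List.replicate k a).getLast? = some a := by
  obtain ⟨k', rfl⟩ : ∃ k', k = k' + 1 := ⟨k - 1, by omega⟩
  have e : List.replicate (k'+1) a = List.replicate k' a ++ [a] := by
    rw [List.replicate_add, List.replicate_one]
  rw [e, List.getLast?_concat]

lemma E_getLast {a : ℕ} (ha : a = 1 ∨ a = 2) :
    ∀ (x : List ℕ), x ≠ [] → (∀ c ∈ x, 0 < c) →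
    (E a x).getLast? = some (3 - par a x.length) := by
  intro x
  induction x generalizing a with
  | nil => intro h; exact absurd rfl h
  | cons c x' ih =>
    intro _ hpos
    cases x' with
    | nil =>
      have hc : 0 < c := hpos c (by simp)
      rw [E_cons]
      have : E (3-a) ([] : List ℕ) = [] := rfl
      rw [this, List.append_nil, getLast?_replicate_pos a c hc]
      have hp : par a ([c] : List ℕ).length = 3 - a := by
        unfold par
        simp
      rw [hp]
      congr 1
      omega
    | cons c₂ x'' =>
      have hne : E (3-a) (c₂::x'') ≠ [] := by
        intro hcon
        have := congrArg List.length hcon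
        rw [E_length] at this
        simp at this
        have := hpos c₂ (by simp)
        omega
      rw [E_cons, getLast?_append_ne _ _ hne]
      rw [ih (a := 3-a) (by omega) (by simp) (fun y hy => hpos y (by simp [hy]))]
      have hp : par (3-a) (c₂::x'').length = par a (c::c₂::x'').length := by
        unfold par
        simp only [List.length_cons]
        rcases Nat.even_or_odd x''.length with he | ho
        · have e1 : x''.length % 2 = 0 := Nat.even_iff.mp he
          rw [if_neg (by omega), if_pos (by omega)]
          omega
        · have e1 : x''.length % 2 = 1 := Nat.odd_iff.mp ho
          rw [if_pos (by omega), if_neg (by omega)]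
      rw [hp]


def Occ (w s v : List ℕ) : Prop :=
  (∃ t, w = s ++ v ++ t) ∧ SRMin v ∧ height v = height w

lemma sum_pos_ne_nil {x : List ℕ} (hx : x ≠ []) (hpos : ∀ c ∈ x, 0 < c) : 0 < x.sum := by
  cases x with
  | nil => exact absurd rfl hx
  | cons c x' =>
    have := hpos c (by simp)
    simp
    omega

lemma concat_inj' {l₁ l₂ : List ℕ} {a b : ℕ} (h : l₁ ++ [a] = l₂ ++ [b]) :
    l₁ = l₂ ∧ a = b := by
  have h2 := congrArg List.reverse h
  simp at h2
  obtain ⟨h3, h4⟩ := h2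
  exact ⟨by have := congrArg List.reverse h4; simpa using this, h3⟩

lemma E_ne_nil {b : ℕ} {x : List ℕ} (hx : x ≠ []) (hpos : ∀ c ∈ x, 0 < c) :
    E b x ≠ [] := by
  intro hcon
  have := congrArg List.length hcon
  rw [E_length] at this
  simp at this
  have := sum_pos_ne_nil hx hpos
  omega

lemma occ_up {w : List ℕ} (hw : Cinf w) (hk : 2 ≤ height w)
    {dL dR : List ℕ} (hdec : rle w = dL ++ D w ++ dR)
    (hdL : dL = [] ∨ dL = [1]) (hdR : dR = [] ∨ dR = [1])
    (hheadL : dL = [] → (D w).head? ≠ some 1)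
    (hlastR : dR = [] → D w ≠ [] → (D w).getLast? ≠ some 1)
    {s'' u t'' : List ℕ} (hdw : D w = s'' ++ u ++ t'')
    (hu : SRMin u) (hhu : height u = height w - 1) :
    ∃ s v, Occ w s v ∧ D v = u := by
  have hwne : w ≠ [] := by
    intro hcon
    rw [hcon, height_eq_zero_iff.mpr rfl] at hk
    omega
  have hune : u ≠ [] := by
    intro hcon
    rw [hcon, height_eq_zero_iff.mpr rfl] at hhu
    omega
  have hDwne : D w ≠ [] := by
    intro hcon
    have : height (D w) = 0 := height_eq_zero_iff.mpr hcon
    rw [height_D w hwne] at this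
    omega
  obtain ⟨a, w₀, rfl⟩ : ∃ a w₀, w = a :: w₀ := by
    cases w with
    | nil => exact absurd rfl hwne
    | cons a w₀ => exact ⟨a, w₀, rfl⟩
  set w := a :: w₀ with hwdef
  have ha : a = 1 ∨ a = 2 := hw 0 a (List.mem_cons_self)
  have hEw : E a (rle w) = w := E_recover w (hw 0) a rfl
  set x := dL ++ s'' with hx
  set z := t'' ++ dR with hz
  have hxz : rle w = x ++ u ++ z := by
    rw [hdec, hdw, hx, hz]
    simp
  have hrw12 : ∀ c ∈ rle w, c = 1 ∨ c = 2 := rle_mem_cinf hw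
  have hrwpos : ∀ c ∈ rle w, 0 < c := fun c hc => by have := hrw12 c hc; omega
  have hxpos : ∀ c ∈ x, 0 < c := fun c hc => hrwpos c (by rw [hxz]; simp [hc])
  have hupos : ∀ c ∈ u, 0 < c := fun c hc => hrwpos c (by rw [hxz]; simp [hc])
  have hzpos : ∀ c ∈ z, 0 < c := fun c hc => hrwpos c (by rw [hxz]; simp [hc])
  set m := par a x.length with hm
  have ham : m = 1 ∨ m = 2 := par_mem ha _
  set m' := par m u.length with hm'
  have ham' : m' = 1 ∨ m' = 2 := par_mem ham _
  set P := E a x with hP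
  set M := E m u with hM
  set Q := E m' z with hQ
  have hsplit : w = P ++ M ++ Q := by
    conv_lhs => rw [← hEw, hxz]
    rw [show x ++ u ++ z = (x ++ u) ++ z from (by simp), E_append' ha]
    rw [E_append' ha x u]
    rw [hP, hM, hQ, hm, hm']
    congr 2
    rw [List.length_append, par_add ha]
  -- facts for lam = [1] case
  have hxne_of_lam : lam u = [1] → x ≠ [] := by
    intro hlam hcon
    rw [hx] at hcon
    have h1 : dL = [] ∧ s'' = [] := List.append_eq_nil_iff.mp hcon
    have h2 := hheadL h1.1
    rw [hdw, h1.2, List.nil_append] at h2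
    have h3 : (u ++ t'').head? = some 1 := by
      have := (lam_eq_one_iff u).mp hlam
      exact head?_append_some this
    exact h2 h3
  have hzne_of_rho : rho u = [1] → z ≠ [] := by
    intro hrho hcon
    rw [hz] at hcon
    have h1 : t'' = [] ∧ dR = [] := List.append_eq_nil_iff.mp hcon
    have h2 := hlastR h1.2 hDwne
    rw [hdw, h1.1, List.append_nil] at h2
    have h3 : (s'' ++ u).getLast? = some 1 := by
      rw [getLast?_append_ne _ _ hune]
      exact (rho_eq_one_iff u).mp hrho
    exact h2 h3
  -- decompose P when lam = [1]
  rcases lam_cases u with hlam | hlam <;> rcases rho_cases u with hrho | hrho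
  · -- lam = [], rho = []
    obtain ⟨hSR, hh, hD⟩ := SRMin_lift hu m ham
    refine ⟨P, E m (lam u ++ u ++ rho u), ⟨⟨Q, ?_⟩, hSR, by omega⟩, hD⟩
    rw [hlam, hrho, List.nil_append, List.append_nil, hsplit, hM]
    all_goals simp
  · -- lam = [], rho = [1]
    have hzne := hzne_of_rho hrho
    have hQne : Q ≠ [] := E_ne_nil hzne hzpos
    have hQhead : Q.head? = some m' := E_head?' m' z hzne hzpos
    obtain ⟨q₁, Qt, hQeq⟩ : ∃ q₁ Qt, Q = q₁ :: Qt := by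
      cases hq : Q with
      | nil => exact absurd hq hQne
      | cons q₁ Qt => exact ⟨q₁, Qt, rfl⟩
    have hq₁ : q₁ = m' := by
      rw [hQeq] at hQhead
      simpa using hQhead
    obtain ⟨hSR, hh, hD⟩ := SRMin_lift hu m ham
    have hveq : E m (lam u ++ u ++ rho u) = M ++ [m'] := by
      rw [hlam, hrho, List.nil_append, E_append' ham, hM, hm']
      congr 1
      all_goals simp [E]
    refine ⟨P, E m (lam u ++ u ++ rho u), ⟨⟨Qt, ?_⟩, hSR, by omega⟩, hD⟩
    rw [hveq, hsplit, hQeq, hq₁]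
    all_goals simp
  · -- lam = [1], rho = []
    have hxne := hxne_of_lam hlam
    have hPne : P ≠ [] := E_ne_nil hxne hxpos
    have hPlast : P.getLast? = some (3 - m) := E_getLast ha x hxne hxpos
    have hPeq : P = P.dropLast ++ [3 - m] := by
      have h1 : P.getLast hPne = 3 - m := by
        rw [List.getLast?_eq_getLast hPne] at hPlast
        simpa using hPlast
      conv_lhs => rw [← List.dropLast_append_getLast hPne]
      rw [h1]
    obtain ⟨hSR, hh, hD⟩ := SRMin_lift hu (3 - m) (by omega)
    have hveq : E (3-m) (lam u ++ u ++ rho u) = (3 - m) :: M := by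
      rw [hlam, hrho, List.append_nil, List.singleton_append, E_cons]
      rw [show (3:ℕ) - (3 - m) = m from (by omega)]
      rw [hM]
      simp
    refine ⟨P.dropLast, E (3-m) (lam u ++ u ++ rho u), ⟨⟨Q, ?_⟩, hSR, by omega⟩, hD⟩
    rw [hveq, hsplit]
    conv_lhs => rw [hPeq]
    simp
  · -- lam = [1], rho = [1]
    have hxne := hxne_of_lam hlam
    have hPne : P ≠ [] := E_ne_nil hxne hxpos
    have hPlast : P.getLast? = some (3 - m) := E_getLast ha x hxne hxpos
    have hPeq : P = P.dropLast ++ [3 - m] := by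
      have h1 : P.getLast hPne = 3 - m := by
        rw [List.getLast?_eq_getLast hPne] at hPlast
        simpa using hPlast
      conv_lhs => rw [← List.dropLast_append_getLast hPne]
      rw [h1]
    have hzne := hzne_of_rho hrho
    have hQne : Q ≠ [] := E_ne_nil hzne hzpos
    have hQhead : Q.head? = some m' := E_head?' m' z hzne hzpos
    obtain ⟨q₁, Qt, hQeq⟩ : ∃ q₁ Qt, Q = q₁ :: Qt := by
      cases hq : Q with
      | nil => exact absurd hq hQne
      | cons q₁ Qt => exact ⟨q₁, Qt, rfl⟩
    have hq₁ : q₁ = m' := by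
      rw [hQeq] at hQhead
      simpa using hQhead
    obtain ⟨hSR, hh, hD⟩ := SRMin_lift hu (3 - m) (by omega)
    have hveq : E (3-m) (lam u ++ u ++ rho u) = (3 - m) :: (M ++ [m']) := by
      rw [hlam, hrho]
      rw [show [1] ++ u ++ [1] = 1 :: (u ++ [1]) from (by simp), E_cons]
      rw [show (3:ℕ) - (3 - m) = m from (by omega)]
      rw [E_append' ham, hM, hm']
      simp [E]
    refine ⟨P.dropLast, E (3-m) (lam u ++ u ++ rho u), ⟨⟨Qt, ?_⟩, hSR, by omega⟩, hD⟩
    rw [hveq, hsplit]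
    conv_lhs => rw [hPeq]
    rw [hQeq, hq₁]
    simp

lemma occ_down {w : List ℕ} (hw : Cinf w) (hk : 2 ≤ height w)
    {dL dR : List ℕ} (hdec : rle w = dL ++ D w ++ dR)
    (hdL : dL = [] ∨ dL = [1]) (hdR : dR = [] ∨ dR = [1])
    {s v t : List ℕ} (hocc : w = s ++ v ++ t) (hv : SRMin v)
    (hhv : height v = height w) :
    ∃ s'' t'', D w = s'' ++ D v ++ t'' ∧ Occ (D w) s'' (D v) ∧
      s.length + (lam (D v)).length = (dL ++ s'').sum ∧
      v.length = (lam (D v) ++ D v ++ rho (D v)).sum := by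
  have hwne : w ≠ [] := by
    intro hcon
    rw [hcon, height_eq_zero_iff.mpr rfl] at hk
    omega
  have hvne : v ≠ [] := by
    intro hcon
    rw [hcon, height_eq_zero_iff.mpr rfl] at hhv
    omega
  obtain ⟨hSRu, hhu⟩ := SRMin_D hv (by omega)
  set u := D v with hu
  have hune : u ≠ [] := by
    intro hcon
    rw [hcon, height_eq_zero_iff.mpr rfl] at hhu
    omega
  have huw : IsWord u := hSRu.1.1 0
  have hrlev : rle v = lam u ++ u ++ rho u := minimal_shortest hv.1 (by omega)
  obtain ⟨a, w₀, hweq⟩ : ∃ a w₀, w = a :: w₀ := by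
    cases w with
    | nil => exact absurd rfl hwne
    | cons a w₀ => exact ⟨a, w₀, rfl⟩
  have ha : a = 1 ∨ a = 2 := hw 0 a (by rw [hweq]; exact List.mem_cons_self)
  have hEw : E a (rle w) = w := E_recover w (hw 0) a (by rw [hweq]; rfl)
  obtain ⟨bv, v₀, hveq⟩ : ∃ bv v₀, v = bv :: v₀ := by
    cases v with
    | nil => exact absurd rfl hvne
    | cons bv v₀ => exact ⟨bv, v₀, rfl⟩
  have hbv : bv = 1 ∨ bv = 2 := hv.1.1 0 bv (by rw [hveq]; exact List.mem_cons_self)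
  have hEv : E bv (rle v) = v := E_recover v (hv.1.1 0) bv (by rw [hveq]; rfl)
  have heqE : E a (rle w) = s ++ E bv (lam u ++ u ++ rho u) ++ t := by
    rw [← hrlev, hEv, hEw]
    exact hocc
  obtain ⟨x, z, hxz, hlen, hxne, hzne⟩ :=
    CORE u hune huw (rle w) (rle_mem_cinf hw) a ha bv hbv s t heqE
  -- align x with dL
  have hstep1 : ∃ s'', x = dL ++ s'' ∧ D w ++ dR = s'' ++ u ++ z := by
    rcases hdL with hdL' | hdL'
    · refine ⟨x, by rw [hdL']; simp, ?_⟩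
      rw [← hxz, hdec, hdL']
      simp
    · obtain ⟨x₁, x₀, hxeq⟩ : ∃ x₁ x₀, x = x₁ :: x₀ := by
        cases hxcase : x with
        | nil =>
          exfalso
          rw [hxcase, List.nil_append] at hxz
          obtain ⟨u₁, u', hueq⟩ : ∃ u₁ u', u = u₁ :: u' := by
            cases hcase : u with
            | nil => exact absurd hcase hune
            | cons u₁ u' => exact ⟨u₁, u', rfl⟩
          have h1 : (rle w).head? = some 1 := by
            rw [hdec, hdL']
            simp
          have h2 : (rle w).head? = some u₁ := by
            rw [hxz, hueq]
            simp
          rw [h2] at h1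
          injection h1 with h1
          exact hxne ((lam_eq_one_iff u).mpr (by rw [hueq]; simp [h1])) hxcase
        | cons x₁ x₀ => exact ⟨x₁, x₀, rfl⟩
      have hcomb : dL ++ (D w ++ dR) = x ++ (u ++ z) := by
        rw [← List.append_assoc, ← hdec, hxz]
        simp
      rw [hdL', hxeq] at hcomb
      simp only [List.singleton_append, List.cons_append] at hcomb
      injection hcomb with h1 h2
      exact ⟨x₀, by rw [hxeq, hdL', h1]; rfl, by simpa using h2⟩
  obtain ⟨s'', hxs, hmid⟩ := hstep1
  have hstep2 : ∃ t'', D w = s'' ++ u ++ t'' ∧ z = t'' ++ dR := by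
    rcases hdR with hdR' | hdR'
    · refine ⟨z, ?_, by rw [hdR']; simp⟩
      rw [hdR', List.append_nil] at hmid
      exact hmid
    · obtain ⟨z₀, zl, hzeq⟩ : ∃ z₀ zl, z = z₀ ++ [zl] := by
        rcases List.eq_nil_or_concat z with hznil | ⟨z₀, zl, hzc⟩
        · exfalso
          rw [hznil, List.append_nil] at hmid
          have h1 : (D w ++ dR).getLast? = some 1 := by
            rw [hdR', getLast?_append_ne _ _ (by simp : ([1]:List ℕ) ≠ [])]
            rfl
          have h2 : (s'' ++ u).getLast? = u.getLast? := getLast?_append_ne _ _ hune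
          rw [hmid, h2] at h1
          exact hzne ((rho_eq_one_iff u).mpr h1) hznil
        · exact ⟨z₀, zl, by rw [hzc, List.concat_eq_append]⟩
      rw [hdR', hzeq] at hmid
      have hmid2 : (D w) ++ [1] = (s'' ++ u ++ z₀) ++ [zl] := by
        rw [hmid]
        simp
      obtain ⟨h1, h2⟩ := concat_inj' hmid2
      exact ⟨z₀, h1, by rw [hzeq, hdR', h2]⟩
  obtain ⟨t'', hDdec, hzt⟩ := hstep2
  refine ⟨s'', t'', hDdec, ⟨⟨t'', hDdec⟩, hSRu, ?_⟩, ?_, ?_⟩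
  · rw [height_D w hwne, hhu, hhv]
  · rw [← hxs]
    exact hlen
  · rw [← hrlev, rle_sum]



lemma D_single (a : ℕ) : D [a] = [] := by
  have h1 : rle [a] = [1] := by simp [rle]
  rw [D_eq, h1]
  have h2 : trimLast [1] = [] := by
    have := trimLast_concat_one ([] : List ℕ)
    simpa using this
  rw [h2]
  rfl

lemma D_pair_ne {a b : ℕ} (hab : a ≠ b) : D [a,b] = [] := by
  have h1 : rle [a,b] = [1,1] := by
    rw [rle, if_neg hab]
    simp [rle]
  rw [D_eq, h1]
  have h2 : trimLast [1,1] = [1] := by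
    have := trimLast_concat_one [1]
    simpa using this
  rw [h2]
  rfl

lemma D_pair_eq (a : ℕ) : D [a,a] = [2] := by
  have h1 : rle [a,a] = [2] := by
    rw [rle, if_pos rfl]
    simp [rle]
  rw [D_eq, h1]
  rw [trimLast_of_last_ne _ (by simp)]
  rw [trim1_cons_ne _ _ (by omega)]

lemma height_one_words {w : List ℕ} (hw : IsWord w) (hne : w ≠ []) (h1 : D w = []) :
    w = [1] ∨ w = [2] ∨ w = [1,2] ∨ w = [2,1] := by
  have hlen : w.length ≤ 2 := by
    obtain ⟨dL, dR, hdec, hdL, hdR, _, _, _, _⟩ := D_decomp w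
    rw [h1] at hdec
    have hsum := rle_sum w
    have e1 := sum_cases_len dL hdL
    have e2 := sum_cases_len dR hdR
    have e3 : (rle w).sum = dL.sum + dR.sum := by
      rw [hdec]
      simp
    have e4 : dL.length ≤ 1 := by rcases hdL with rfl | rfl <;> simp
    have e5 : dR.length ≤ 1 := by rcases hdR with rfl | rfl <;> simp
    omega
  match w, hne, hlen with
  | [a], _, _ =>
    rcases hw a (by simp) with rfl | rfl
    · exact Or.inl rfl
    · exact Or.inr (Or.inl rfl)
  | [a, b], _, _ =>
    by_cases hab : a = b
    · exfalso
      subst hab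
      rw [D_pair_eq] at h1
      simp at h1
    · rcases hw a (by simp) with rfl | rfl <;> rcases hw b (by simp) with rfl | rfl
      · exact absurd rfl hab
      · exact Or.inr (Or.inr (Or.inl rfl))
      · exact Or.inr (Or.inr (Or.inr rfl))
      · exact absurd rfl hab
  | a :: b :: c :: r, _, hlen => simp at hlen

lemma height_single {a : ℕ} (ha : a = 1 ∨ a = 2) : height [a] = 1 := by
  have h1 : height [a] ≤ 1 := height_le_iff.mpr (by rw [Function.iterate_one, D_single])
  have h2 : height [a] ≠ 0 := fun h => by simpa using height_eq_zero_iff.mp h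
  omega

lemma height_pair {a b : ℕ} (hab : a ≠ b) : height [a,b] = 1 := by
  have h1 : height [a,b] ≤ 1 := height_le_iff.mpr (by rw [Function.iterate_one, D_pair_ne hab])
  have h2 : height [a,b] ≠ 0 := fun h => by simpa using height_eq_zero_iff.mp h
  omega

lemma cinf_of_D_nil {w : List ℕ} (hw : IsWord w) (h : D w = []) : Cinf w := by
  intro k
  cases k with
  | zero => exact hw
  | succ k =>
    rw [Function.iterate_succ_apply, h, iter_D_nil]
    intro x hx
    simp at hx

lemma root_height_one {v : List ℕ} (h : height v = 1) : root v = v := by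
  show D^[height v - 1] v = v
  rw [h]
  rfl

lemma SRMin_single {a : ℕ} (ha : a = 1 ∨ a = 2) : SRMin [a] := by
  have hh := height_single ha
  refine ⟨⟨cinf_of_D_nil ?_ (D_single a), by omega, ?_⟩, ?_⟩
  · intro x hx
    simp at hx
    subst hx
    exact ha
  · intro j hj
    rw [hh] at hj
    omega
  · rw [root_height_one hh]
    rfl

lemma occ_split_single {a : ℕ} {s v t : List ℕ} (h : [a] = s ++ v ++ t) (hv : v ≠ []) :
    s = [] ∧ v = [a] ∧ t = [] := by
  have hl := congrArg List.length h
  simp at hl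
  have hv1 : 1 ≤ v.length := List.length_pos_iff.mpr hv
  have hs0 : s.length = 0 := by omega
  have ht0 : t.length = 0 := by omega
  have hs : s = [] := List.length_eq_zero_iff.mp hs0
  have ht : t = [] := List.length_eq_zero_iff.mp ht0
  subst hs; subst ht
  simp at h
  exact ⟨rfl, h.symm, rfl⟩

lemma occ_split_pair {a b : ℕ} {s v t : List ℕ} (h : [a,b] = s ++ v ++ t) (hv : v ≠ []) :
    (s = [] ∧ v = [a] ∧ t = [b]) ∨ (s = [a] ∧ v = [b] ∧ t = []) ∨
    (s = [] ∧ v = [a,b] ∧ t = []) := by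
  cases s with
  | nil =>
    simp at h
    cases v with
    | nil => exact absurd rfl hv
    | cons v₁ v' =>
      rw [List.cons_append] at h
      injection h with h1 h2
      subst h1
      cases v' with
      | nil =>
        simp at h2
        exact Or.inl ⟨rfl, rfl, by simp [h2]⟩
      | cons v₂ v'' =>
        rw [List.cons_append] at h2
        injection h2 with h3 h4
        subst h3
        have h5 : v'' = [] ∧ t = [] := by
          have := congrArg List.length h4
          simp at this
          constructor <;> [exact List.length_eq_zero_iff.mp (by omega);
            exact List.length_eq_zero_iff.mp (by omega)]
        exact Or.inr (Or.inr ⟨rfl, by rw [h5.1], h5.2⟩)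
  | cons s₁ s' =>
    rw [List.cons_append, List.cons_append] at h
    injection h with h1 h2
    subst h1
    cases s' with
    | nil =>
      simp at h2
      cases v with
      | nil => exact absurd rfl hv
      | cons v₁ v' =>
        rw [List.cons_append] at h2
        injection h2 with h3 h4
        subst h3
        have h5 : v' = [] ∧ t = [] := by
          have := congrArg List.length h4
          simp at this
          constructor <;> [exact List.length_eq_zero_iff.mp (by omega);
            exact List.length_eq_zero_iff.mp (by omega)]
        exact Or.inr (Or.inl ⟨rfl, by rw [h5.1], h5.2⟩)
    | cons s₂ s'' =>
      exfalso
      rw [List.cons_append, List.cons_append] at h2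
      injection h2 with h3 h4
      have := congrArg List.length h4
      simp at this
      have := List.length_pos_iff.mpr hv
      omega

lemma occ_determined {w s v t s₂ v₂ t₂ : List ℕ} (h1 : w = s ++ v ++ t)
    (h2 : w = s₂ ++ v₂ ++ t₂) (hs : s.length = s₂.length) (hv : v.length = v₂.length) :
    s = s₂ ∧ v = v₂ := by
  have e1 : w.take s.length = s := by
    rw [h1, List.append_assoc]
    exact List.take_left
  have e2 : w.take s₂.length = s₂ := by
    rw [h2, List.append_assoc]
    exact List.take_left
  have f1 : w.drop s.length = v ++ t := by
    rw [h1, List.append_assoc]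
    exact List.drop_left
  have f2 : w.drop s₂.length = v₂ ++ t₂ := by
    rw [h2, List.append_assoc]
    exact List.drop_left
  constructor
  · rw [← e1, ← e2, hs]
  · have g1 : (v ++ t).take v.length = v := List.take_left
    have g2 : (v₂ ++ t₂).take v₂.length = v₂ := List.take_left
    rw [← g1, ← g2, ← f1, ← f2, hs, hv]



lemma Occ_single_word {a : ℕ} (ha : a = 1 ∨ a = 2) {w : List ℕ} (hk : height w = 1)
    (hw : w = [a]) :
    ∃ s v, Occ w s v ∧ ∀ s' v', Occ w s' v' → s' = s ∧ v' = v := by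
  subst hw
  refine ⟨[], [a], ⟨⟨[], by simp⟩, SRMin_single ha, rfl⟩, ?_⟩
  intro s' v' ⟨⟨t', heq⟩, hS', hh'⟩
  have hv'ne : v' ≠ [] := by
    intro h
    rw [h, height_eq_zero_iff.mpr rfl] at hh'
    rw [hk] at hh'
    simp at hh'
  obtain ⟨h1, h2, h3⟩ := occ_split_single heq hv'ne
  exact ⟨h1, h2⟩

lemma Occ_pair_word {a b : ℕ} (ha : a = 1 ∨ a = 2) (hb : b = 1 ∨ b = 2) (hab : a ≠ b)
    {w : List ℕ} (hk : height w = 1) (hw : w = [a, b]) :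
    ∃ s₁ v₁ s₂ v₂, Occ w s₁ v₁ ∧ Occ w s₂ v₂ ∧ v₁ ≠ v₂ ∧
      ∀ s' v', Occ w s' v' → (s' = s₁ ∧ v' = v₁) ∨ (s' = s₂ ∧ v' = v₂) := by
  subst hw
  refine ⟨[], [a], [a], [b],
    ⟨⟨[b], by simp⟩, SRMin_single ha, by rw [height_single ha, hk]⟩,
    ⟨⟨[], by simp⟩, SRMin_single hb, by rw [height_single hb, hk]⟩,
    by simp [hab], ?_⟩
  intro s' v' ⟨⟨t', heq⟩, hS', hh'⟩
  have hv'ne : v' ≠ [] := by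
    intro h
    rw [h, height_eq_zero_iff.mpr rfl] at hh'
    rw [hk] at hh'
    simp at hh'
  rcases occ_split_pair heq hv'ne with ⟨h1, h2, _⟩ | ⟨h1, h2, _⟩ | ⟨h1, h2, _⟩
  · exact Or.inl ⟨h1, h2⟩
  · exact Or.inr ⟨h1, h2⟩
  · exfalso
    -- v' = w, but then root v' has length 2, contradicting SRMin
    have hhv' : height v' = 1 := by rw [hh', hk]
    have := hS'.2
    rw [root_height_one hhv', h2] at this
    simp at this

lemma MAIN : ∀ k w, Cinf w → height w = k →
    ((root w).length = 1 → ∃ s v, Occ w s v ∧ ∀ s' v', Occ w s' v' → s' = s ∧ v' = v) ∧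
    ((root w).length = 2 → ∃ s₁ v₁ s₂ v₂, Occ w s₁ v₁ ∧ Occ w s₂ v₂ ∧ v₁ ≠ v₂ ∧
      ∀ s' v', Occ w s' v' → (s' = s₁ ∧ v' = v₁) ∨ (s' = s₂ ∧ v' = v₂)) := by
  intro k
  induction k using Nat.strong_induction_on with
  | _ k ih =>
  intro w hw hk
  rcases Nat.lt_or_ge k 2 with hk2 | hk2
  · -- base cases k = 0 or k = 1
    rcases Nat.lt_or_ge k 1 with hk1 | hk1
    · -- k = 0
      have hk0 : k = 0 := by omega
      subst hk0
      have hwnil : w = [] := height_eq_zero_iff.mp hk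
      have hroot : root w = [] := by
        show D^[height w - 1] w = []
        rw [hwnil, iter_D_nil]
      rw [hroot]
      constructor <;> intro h <;> simp at h
    · -- k = 1
      have hk1' : k = 1 := by omega
      subst hk1'
      have hwne : w ≠ [] := fun h => by
        rw [h, height_eq_zero_iff.mpr rfl] at hk
        simp at hk
      have hD1 : D w = [] := by
        have h := iter_height w
        rwa [hk, Function.iterate_one] at h
      have hroot : root w = w := root_height_one hk
      have hword : IsWord w := by
        have h := hw 0
        rwa [Function.iterate_zero_apply] at h
      rcases height_one_words hword hwne hD1 with hcase | hcase | hcase | hcase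
      · constructor
        · intro _
          exact Occ_single_word (Or.inl rfl) hk hcase
        · intro h2
          rw [hroot, hcase] at h2
          simp at h2
      · constructor
        · intro _
          exact Occ_single_word (Or.inr rfl) hk hcase
        · intro h2
          rw [hroot, hcase] at h2
          simp at h2
      · constructor
        · intro h2
          rw [hroot, hcase] at h2
          simp at h2
        · intro _
          exact Occ_pair_word (Or.inl rfl) (Or.inr rfl) (by omega) hk hcase
      · constructor
        · intro h2
          rw [hroot, hcase] at h2
          simp at h2
        · intro _
          exact Occ_pair_word (Or.inr rfl) (Or.inl rfl) (by omega) hk hcase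
  · -- inductive step k ≥ 2
    have hkpos : 2 ≤ height w := by omega
    have hwne : w ≠ [] := fun h => by
      rw [h, height_eq_zero_iff.mpr rfl] at hk
      omega
    have hw' : Cinf (D w) := cinf_D hw
    have hk' : height (D w) = k - 1 := by rw [height_D w hwne, hk]
    have hroot' : root (D w) = root w := root_D w hkpos
    obtain ⟨dL, dR, hdec, hdL, hdR, hheadL, hlastR, _, _⟩ := D_decomp w
    have IH := ih (k-1) (by omega) (D w) hw' hk'
    constructor
    · -- single-rooted
      intro hroot1
      obtain ⟨s₀, u₀, hoccu, huniq⟩ := IH.1 (by rw [hroot']; exact hroot1)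
      obtain ⟨t₀, hdw⟩ := hoccu.1
      obtain ⟨s₀', v₀, hOcc₀, hD₀⟩ := occ_up hw hkpos hdec hdL hdR hheadL hlastR hdw
        hoccu.2.1 (by rw [hoccu.2.2]; exact height_D w hwne)
      refine ⟨s₀', v₀, hOcc₀, ?_⟩
      obtain ⟨t₀', hw0eq⟩ := hOcc₀.1
      obtain ⟨s₂'', t₂'', hdw₂, hOccD₂, hlen₂, hvlen₂⟩ :=
        occ_down hw hkpos hdec hdL hdR hw0eq hOcc₀.2.1 hOcc₀.2.2
      obtain ⟨e2s, e2u⟩ := huniq _ _ hOccD₂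
      intro s' v' hocc'
      obtain ⟨t', hw'eq⟩ := hocc'.1
      obtain ⟨s₁'', t₁'', hdw₁, hOccD₁, hlen₁, hvlen₁⟩ :=
        occ_down hw hkpos hdec hdL hdR hw'eq hocc'.2.1 hocc'.2.2
      obtain ⟨e1s, e1u⟩ := huniq _ _ hOccD₁
      rw [e1s] at hlen₁
      rw [e1u] at hlen₁ hvlen₁
      rw [e2s] at hlen₂
      rw [e2u] at hlen₂ hvlen₂
      have hs : s'.length = s₀'.length := by omega
      have hv : v'.length = v₀.length := by omega
      exact occ_determined hw'eq hw0eq hs hv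
    · -- double-rooted
      intro hroot2
      obtain ⟨sa, ua, sb, ub, hoccua, hoccub, huab, huniq⟩ :=
        IH.2 (by rw [hroot']; exact hroot2)
      obtain ⟨ta, hdwa⟩ := hoccua.1
      obtain ⟨tb, hdwb⟩ := hoccub.1
      obtain ⟨sa', va, hOcca, hDa⟩ := occ_up hw hkpos hdec hdL hdR hheadL hlastR hdwa
        hoccua.2.1 (by rw [hoccua.2.2]; exact height_D w hwne)
      obtain ⟨sb', vb, hOccb, hDb⟩ := occ_up hw hkpos hdec hdL hdR hheadL hlastR hdwb
        hoccub.2.1 (by rw [hoccub.2.2]; exact height_D w hwne)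
      obtain ⟨ta', hwaeq⟩ := hOcca.1
      obtain ⟨tb', hwbeq⟩ := hOccb.1
      obtain ⟨sa'', ta'', hdwa2, hOccDa, hlena, hvlena⟩ :=
        occ_down hw hkpos hdec hdL hdR hwaeq hOcca.2.1 hOcca.2.2
      obtain ⟨sb'', tb'', hdwb2, hOccDb, hlenb, hvlenb⟩ :=
        occ_down hw hkpos hdec hdL hdR hwbeq hOccb.2.1 hOccb.2.2
      have hDva : D va = ua := hDa
      have hDvb : D vb = ub := hDb
      -- which branch does each down-image land in?
      have hA : sa'' = sa := by
        rcases huniq _ _ hOccDa with h | h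
        · exact h.1
        · rw [hDva] at h
          exact absurd h.2 huab
      have hB : sb'' = sb := by
        rcases huniq _ _ hOccDb with h | h
        · rw [hDvb] at h
          exact absurd h.2.symm huab
        · exact h.1
      refine ⟨sa', va, sb', vb, hOcca, hOccb, ?_, ?_⟩
      · intro hcon
        rw [hcon, hDvb] at hDva
        exact huab hDva.symm
      · intro s' v' hocc'
        obtain ⟨t', hw'eq⟩ := hocc'.1
        obtain ⟨s₁'', t₁'', hdw₁, hOccD₁, hlen₁, hvlen₁⟩ :=
          occ_down hw hkpos hdec hdL hdR hw'eq hocc'.2.1 hocc'.2.2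
        rcases huniq _ _ hOccD₁ with ⟨e1s, e1u⟩ | ⟨e1s, e1u⟩
        · left
          rw [hA] at hlena
          rw [hDva] at hlena hvlena
          rw [e1s] at hlen₁
          rw [e1u] at hlen₁ hvlen₁
          have hs : s'.length = sa'.length := by omega
          have hv : v'.length = va.length := by omega
          exact occ_determined hw'eq hwaeq hs hv
        · right
          rw [hB] at hlenb
          rw [hDvb] at hlenb hvlenb
          rw [e1s] at hlen₁
          rw [e1u] at hlen₁ hvlen₁
          have hs : s'.length = sb'.length := by omega
          have hv : v'.length = vb.length := by omega
          exact occ_determined hw'eq hwbeq hs hv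



theorem minimal_factors_count' (w : List ℕ) (hw : Cinf w) (hk : 0 < height w) :
    ((root w).length = 1 →
      {u | u <:+: w ∧ SRMin u ∧ height u = height w}.ncard = 1) ∧
    ((root w).length = 2 →
      {u | u <:+: w ∧ SRMin u ∧ height u = height w}.ncard = 2) := by
  have hmain := MAIN (height w) w hw rfl
  constructor
  · intro h1
    obtain ⟨s₀, v₀, hOcc₀, huniq⟩ := hmain.1 h1
    have hset : {u | u <:+: w ∧ SRMin u ∧ height u = height w} = {v₀} := by
      ext u
      simp only [Set.mem_setOf_eq, Set.mem_singleton_iff]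
      constructor
      · rintro ⟨⟨s, t, hst⟩, hS, hh⟩
        exact (huniq s u ⟨⟨t, hst.symm⟩, hS, hh⟩).2
      · rintro rfl
        obtain ⟨⟨t₀, hteq⟩, hS, hh⟩ := hOcc₀
        exact ⟨⟨s₀, t₀, hteq.symm⟩, hS, hh⟩
    rw [hset]
    exact Set.ncard_singleton v₀
  · intro h2
    obtain ⟨s₁, v₁, s₂, v₂, hO1, hO2, hne, huniq⟩ := hmain.2 h2
    have hset : {u | u <:+: w ∧ SRMin u ∧ height u = height w} = {v₁, v₂} := by
      ext u
      simp only [Set.mem_setOf_eq, Set.mem_insert_iff, Set.mem_singleton_iff]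
      constructor
      · rintro ⟨⟨s, t, hst⟩, hS, hh⟩
        rcases huniq s u ⟨⟨t, hst.symm⟩, hS, hh⟩ with ⟨-, h⟩ | ⟨-, h⟩
        · exact Or.inl h
        · exact Or.inr h
      · rintro (rfl | rfl)
        · obtain ⟨⟨t₁, hteq⟩, hS, hh⟩ := hO1
          exact ⟨⟨s₁, t₁, hteq.symm⟩, hS, hh⟩
        · obtain ⟨⟨t₂, hteq⟩, hS, hh⟩ := hO2
          exact ⟨⟨s₂, t₂, hteq.symm⟩, hS, hh⟩
    rw [hset]
    exact Set.ncard_pair hne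



/-- a single-rooted (resp. double-rooted) C∞-word of height k > 0 has
exactly one (resp. exactly two) factors that are single-rooted minimal words of
height k. -/
theorem minimal_factors_count (w : List ℕ) (hw : Cinf w) (hk : 0 < height w) :
    ((root w).length = 1 →
      {u | u <:+: w ∧ SRMin u ∧ height u = height w}.ncard = 1) ∧
    ((root w).length = 2 →
      {u | u <:+: w ∧ SRMin u ∧ height u = height w}.ncard = 2) :=
  minimal_factors_count' w hw hk

end CInfWords
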